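/- Let c ≥ 3 be an integer and F₁ > 0 a real number, and let P(x) = x³ − (c+1)x² + cx − F₁. Then the greatest real root ξ of P satisfies ξ > c, ξ is a simple root of P, and every other (real or complex) root of P has modulus strictly less than ξ. -/

import Mathlib

/-- For an integer `c ≥ 3` and a real `F₁ > 0`, the greatest real root `ξ` of
`P(x) = x³ − (c+1)x² + cx − F₁` satisfies `ξ > c`, is a simple root of `P`, and every other
complex root of `P` has modulus strictly less than `ξ`. -/
theorem cubic_dominant_root (c : ℕ) (hc : 3 ≤ c) (F₁ : ℝ) (hF : 0 < F₁)
    (P : ℝ → ℝ) (hP : ∀ x, P x = x ^ 3 - (c + 1) * x ^ 2 + c * x - F₁)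
    (ξ : ℝ) (hroot : P ξ = 0) (hmax : ∀ y : ℝ, P y = 0 → y ≤ ξ) :
    (c : ℝ) < ξ ∧ deriv P ξ ≠ 0 ∧
      ∀ w : ℂ, w ^ 3 - ((c : ℂ) + 1) * w ^ 2 + (c : ℂ) * w - (F₁ : ℂ) = 0 →
        w ≠ (ξ : ℂ) → ‖w‖ < ξ := by
  have hc3 : (3 : ℝ) ≤ (c : ℝ) := by exact_mod_cast hc
  have hPe : P = fun x => x ^ 3 - ((c : ℝ) + 1) * x ^ 2 + (c : ℝ) * x - F₁ := funext hP
  subst hPe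
  -- real root equation
  have hr : ξ ^ 3 - ((c : ℝ) + 1) * ξ ^ 2 + (c : ℝ) * ξ - F₁ = 0 := hroot
  -- Step 1: c < ξ
  have hcont : ContinuousOn (fun x : ℝ => x ^ 3 - ((c : ℝ) + 1) * x ^ 2 + (c : ℝ) * x - F₁)
      (Set.Icc (c : ℝ) ((c : ℝ) + 1 + F₁)) := by fun_prop
  have hle : (c : ℝ) ≤ (c : ℝ) + 1 + F₁ := by linarith
  have hPc : ((c:ℝ) ^ 3 - ((c : ℝ) + 1) * (c:ℝ) ^ 2 + (c : ℝ) * (c:ℝ) - F₁) = -F₁ := by ring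
  have hPM : (0:ℝ) ≤ (((c:ℝ)+1+F₁) ^ 3 - ((c : ℝ) + 1) * ((c:ℝ)+1+F₁) ^ 2
      + (c : ℝ) * ((c:ℝ)+1+F₁) - F₁) := by nlinarith [sq_nonneg F₁, sq_nonneg ((c:ℝ)+F₁)]
  have hivt : (0:ℝ) ∈ (fun x : ℝ => x ^ 3 - ((c : ℝ) + 1) * x ^ 2 + (c : ℝ) * x - F₁) ''
      Set.Icc (c : ℝ) ((c : ℝ) + 1 + F₁) := by
    apply intermediate_value_Icc hle hcont
    constructor
    · simp only [hPc]; linarith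
    · exact hPM
  obtain ⟨y, hy, hy0⟩ := hivt
  have hyx : y ≤ ξ := hmax y hy0
  have hcx : (c : ℝ) < ξ := by
    rcases lt_or_eq_of_le (le_trans hy.1 hyx) with h | h
    · exact h
    · exfalso; rw [← h] at hr; nlinarith
  have hξ0 : (0:ℝ) < ξ := by linarith
  refine ⟨hcx, ?_, ?_⟩
  · -- derivative nonzero
    have hd : HasDerivAt (fun x : ℝ => x ^ 3 - ((c : ℝ) + 1) * x ^ 2 + (c : ℝ) * x - F₁)
        (3 * ξ ^ 2 - ((c:ℝ)+1) * (2 * ξ) + (c:ℝ)) ξ := by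
      have h1 : HasDerivAt (fun x : ℝ => x ^ 3) (3 * ξ ^ 2) ξ := by
        simpa using hasDerivAt_pow 3 ξ
      have h2 : HasDerivAt (fun x : ℝ => ((c:ℝ)+1) * x ^ 2) (((c:ℝ)+1) * (2 * ξ)) ξ := by
        simpa using (hasDerivAt_pow 2 ξ).const_mul ((c:ℝ)+1)
      have h3 : HasDerivAt (fun x : ℝ => (c:ℝ) * x) ((c:ℝ)) ξ := by
        simpa using (hasDerivAt_id ξ).const_mul (c:ℝ)
      simpa using ((h1.sub h2).add h3).sub_const F₁
    rw [hd.deriv]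
    nlinarith
  · intro w hw hwξ
    -- factor out (w - ξ)
    have hrc : (ξ:ℂ) ^ 3 - ((c : ℂ) + 1) * (ξ:ℂ) ^ 2 + (c : ℂ) * (ξ:ℂ) - (F₁:ℂ) = 0 := by
      exact_mod_cast congrArg (Complex.ofReal) hr
    set d : ℝ := (c : ℝ) + ξ ^ 2 - ((c:ℝ)+1) * ξ with hd_def
    set b : ℝ := ξ - (c:ℝ) - 1 with hb_def
    have hξd : ξ * d = F₁ := by rw [hd_def]; linear_combination hr
    clear_value b d
    have hfac : (w - (ξ:ℂ)) * (w ^ 2 + (b:ℂ) * w + (d:ℂ)) = 0 := by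
      have hbc : (b:ℂ) = (ξ:ℂ) - (c:ℂ) - 1 := by rw [hb_def]; push_cast; ring
      have hdc : (d:ℂ) = (c:ℂ) + (ξ:ℂ)^2 - ((c:ℂ)+1) * (ξ:ℂ) := by rw [hd_def]; push_cast; ring
      rw [hbc, hdc]
      linear_combination hw - hrc
    have hq : w ^ 2 + (b:ℂ) * w + (d:ℂ) = 0 := by
      rcases mul_eq_zero.mp hfac with h | h
      · exact absurd (sub_eq_zero.mp h) hwξ
      · exact h
    by_cases him : w.im = 0
    · -- w is real
      have hwre : ((w.re : ℂ)) = w := Complex.ext rfl (by simp [him])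
      have hreal : ((w.re ^ 3 - ((c:ℝ) + 1) * w.re ^ 2 + (c:ℝ) * w.re - F₁ : ℝ) : ℂ) = 0 := by
        push_cast
        rw [hwre]
        exact hw
      have hreal' : w.re ^ 3 - ((c:ℝ) + 1) * w.re ^ 2 + (c:ℝ) * w.re - F₁ = 0 := by
        exact_mod_cast hreal
      have hle' : w.re ≤ ξ := hmax w.re hreal'
      have hne : w.re ≠ ξ := by
        intro h
        exact hwξ (by rw [← hwre, h])
      have hpos : 0 < w.re := by nlinarith [hreal', sq_nonneg w.re, sq_nonneg (w.re - 1)]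
      rw [← hwre, Complex.norm_real, Real.norm_eq_abs, abs_of_pos hpos]
      exact lt_of_le_of_ne hle' hne
    · -- w is not real: conjugate is the other quadratic root
      have hq2 : (starRingEnd ℂ) w ^ 2 + (b:ℂ) * (starRingEnd ℂ) w + (d:ℂ) = 0 := by
        have := congrArg (starRingEnd ℂ) hq
        simpa [map_add, map_mul, map_pow, Complex.conj_ofReal] using this
      have hfac2 : (w - (starRingEnd ℂ) w) * (w + (starRingEnd ℂ) w + (b:ℂ)) = 0 := by
        linear_combination hq - hq2
      have hwc : w ≠ (starRingEnd ℂ) w := by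
        intro h
        exact him (Complex.conj_eq_iff_im.mp h.symm)
      have hsum : w + (starRingEnd ℂ) w + (b:ℂ) = 0 := by
        rcases mul_eq_zero.mp hfac2 with h | h
        · exact absurd (sub_eq_zero.mp h) hwc
        · exact h
      have hprod : w * (starRingEnd ℂ) w = (d:ℂ) := by
        linear_combination w * hsum - hq
      have hnsq : (Complex.normSq w : ℝ) = d := by
        have := (Complex.mul_conj w).symm.trans hprod
        exact_mod_cast this
      have hF3 : F₁ < ξ ^ 3 := by nlinarith [hr]
      have hdlt : d < ξ ^ 2 := by
        have h : ξ * d < ξ * ξ ^ 2 := by rw [hξd]; nlinarith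
        exact lt_of_mul_lt_mul_left h (le_of_lt hξ0)
      have habs2 : (‖w‖) ^ 2 < ξ ^ 2 := by
        rw [Complex.sq_norm, hnsq]; exact hdlt
      nlinarith [norm_nonneg w, habs2]
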